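/- Let Q be the one-vertex quiver with no arrows, m > 2, and R' = {0} the sequence consisting of a single zero relation. The Ginzburg dg-algebra Γ' = Γ(Q, R', m) is the dg path algebra on one vertex with loops ε (degree 2−m), ε* (degree −1), t (degree −m), differential d(ε) = d(ε*) = 0, d(t) = εε* − (−1)^m ε*ε. Then dim_K H^{−i}(Γ') = 1 for 0 ≤ i < m−2, dim_K H^{−(m−2)}(Γ') = 2, and dim_K H^{−(m−1)}(Γ') = 2 + δ_{3,m}. -/

import Mathlib

/-- Degrees of the generators ε, ε*, t of the dg-algebra Γ' = Γ(•, {0}, m). -/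
def deg17 (m : ℤ) : Fin 3 → ℤ := ![2 - m, -1, -m]

/-- The degree-d graded piece of the free graded algebra K⟨ε, ε*, t⟩. -/
def gpF (K : Type) [Field K] (m : ℤ) (d : ℤ) : Submodule K (FreeAlgebra K (Fin 3)) :=
  Submodule.span K
    {x | ∃ l : List (Fin 3), (l.map (deg17 m)).sum = d ∧ x = (l.map (FreeAlgebra.ι K)).prod}

/-- The cohomology H^{−i} of the dg-algebra (K⟨ε, ε*, t⟩, D). -/
abbrev Hneg (K : Type) [Field K] (m : ℤ)
    (D : FreeAlgebra K (Fin 3) →ₗ[K] FreeAlgebra K (Fin 3)) (i : ℤ) :=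
  ↥(gpF K m (-i) ⊓ LinearMap.ker D) ⧸
    Submodule.comap (gpF K m (-i) ⊓ LinearMap.ker D).subtype
      (Submodule.map D (gpF K m (-i - 1)))

open Submodule Module

namespace Stmt17Aux

noncomputable abbrev wd (K : Type) [Field K] (l : List (Fin 3)) : FreeAlgebra K (Fin 3) :=
  (l.map (FreeAlgebra.ι K)).prod

theorem basis_word (K : Type) [Field K] (l : List (Fin 3)) :
    FreeAlgebra.basisFreeMonoid K (Fin 3) (FreeMonoid.ofList l) = wd K l := by
  simp [FreeAlgebra.basisFreeMonoid, FreeAlgebra.equivMonoidAlgebraFreeMonoid,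
    MonoidAlgebra.lift_apply, FreeMonoid.lift_apply]

theorem wd_ne_zero (K : Type) [Field K] (l : List (Fin 3)) : wd K l ≠ 0 := by
  rw [← basis_word]
  exact Basis.ne_zero _ _

theorem range2 {α : Type*} (f : Fin 2 → α) : Set.range f = {f 0, f 1} := by
  ext x
  constructor
  · rintro ⟨j, rfl⟩; fin_cases j <;> simp
  · rintro (rfl | rfl) <;> exact ⟨_, rfl⟩

theorem range3 {α : Type*} (f : Fin 3 → α) : Set.range f = {f 0, f 1, f 2} := by
  ext x
  constructor
  · rintro ⟨j, rfl⟩; fin_cases j <;> simp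
  · rintro (rfl | rfl | rfl) <;> exact ⟨_, rfl⟩

theorem range4 {α : Type*} (f : Fin 4 → α) : Set.range f = {f 0, f 1, f 2, f 3} := by
  ext x
  constructor
  · rintro ⟨j, rfl⟩; fin_cases j <;> simp
  · rintro (rfl | rfl | rfl | rfl) <;> exact ⟨_, rfl⟩

theorem finrank_span_words (K : Type) [Field K] (n : ℕ) (f : Fin n → List (Fin 3))
    (hf : Function.Injective f) :
    finrank K (span K (Set.range fun j => wd K (f j))) = n := by
  have h1 : (fun j => wd K (f j))
      = fun j => FreeAlgebra.basisFreeMonoid K (Fin 3) (FreeMonoid.ofList (f j)) :=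
    funext fun j => (basis_word K (f j)).symm
  have h2 := finrank_span_eq_card (R := K)
    ((FreeAlgebra.basisFreeMonoid K (Fin 3)).linearIndependent.comp
      (FreeMonoid.ofList ∘ f) (FreeMonoid.ofList.injective.comp hf))
  rw [h1]
  simpa [Function.comp_def] using h2

/-! ### List combinatorics -/

theorem sum_formula (m : ℤ) (l : List (Fin 3)) :
    (l.map (deg17 m)).sum = (l.count 0 : ℤ) * (2 - m) - l.count 1 - (l.count 2 : ℤ) * m := by
  induction l with
  | nil => simp
  | cons h t ih =>
    fin_cases h <;> simp [List.count_cons, deg17] at ih ⊢ <;> rw [ih] <;> push_cast <;> ring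

theorem length_formula (l : List (Fin 3)) :
    l.length = l.count 0 + l.count 1 + l.count 2 := by
  induction l with
  | nil => simp
  | cons h t ih => fin_cases h <;> simp [List.count_cons, ih] <;> omega

theorem eq_replicate_one (l : List (Fin 3)) (h0 : l.count 0 = 0) (h2 : l.count 2 = 0) :
    l = List.replicate (l.count 1) 1 := by
  have hm : ∀ x ∈ l, x = 1 := by
    intro x hx
    fin_cases x
    · exact absurd hx (List.count_eq_zero.mp h0)
    · rfl
    · exact absurd hx (List.count_eq_zero.mp h2)
  have := List.eq_replicate_of_mem hm
  rw [length_formula l, h0, h2] at this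
  simpa using this

theorem eq_single_zero (l : List (Fin 3)) (h0 : l.count 0 = 1) (h1 : l.count 1 = 0)
    (h2 : l.count 2 = 0) : l = [0] := by
  have hm : ∀ x ∈ l, x = 0 := by
    intro x hx
    fin_cases x
    · rfl
    · exact absurd hx (List.count_eq_zero.mp h1)
    · exact absurd hx (List.count_eq_zero.mp h2)
  have := List.eq_replicate_of_mem hm
  rw [length_formula l, h0, h1, h2] at this
  simpa using this

theorem classify_core (m : ℤ) (hm : 2 < m) (i : ℤ) (hi : i ≤ m - 1)
    (l : List (Fin 3)) (hs : (l.map (deg17 m)).sum = -i) :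
    l.count 2 = 0 ∧ (l.count 0 : ℤ) * (m - 2) + l.count 1 = i := by
  rw [sum_formula m l] at hs
  have ha : (0:ℤ) ≤ l.count 0 := Int.ofNat_nonneg _
  have hb : (0:ℤ) ≤ l.count 1 := Int.ofNat_nonneg _
  have hc : (0:ℤ) ≤ l.count 2 := Int.ofNat_nonneg _
  have hA : (0:ℤ) ≤ (l.count 0 : ℤ) * (m - 2) := mul_nonneg ha (by linarith)
  constructor
  · by_contra h
    have hc1 : (1:ℤ) ≤ l.count 2 := by exact_mod_cast Nat.one_le_iff_ne_zero.mpr h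
    nlinarith
  · have hc0 : (l.count 2 : ℤ) = 0 := by
      by_contra h
      have hc1 : (1:ℤ) ≤ l.count 2 := by
        rcases lt_or_eq_of_le hc with h' | h'
        · exact h'
        · exact absurd h'.symm h
      nlinarith
    linear_combination -hs - m * hc0

theorem eq_pair (l : List (Fin 3)) (h0 : l.count 0 = 1) (h1 : l.count 1 = 1)
    (h2 : l.count 2 = 0) : l = [0, 1] ∨ l = [1, 0] := by
  have hl : l.length = 2 := by rw [length_formula l]; omega
  obtain ⟨x, y, rfl⟩ := List.length_eq_two.mp hl
  fin_cases x <;> fin_cases y <;> simp_all [List.count_cons]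

theorem eq_pair_zero (l : List (Fin 3)) (h0 : l.count 0 = 2) (h1 : l.count 1 = 0)
    (h2 : l.count 2 = 0) : l = [0, 0] := by
  have hm : ∀ x ∈ l, x = 0 := by
    intro x hx
    fin_cases x
    · rfl
    · exact absurd hx (List.count_eq_zero.mp h1)
    · exact absurd hx (List.count_eq_zero.mp h2)
  have := List.eq_replicate_of_mem hm
  rw [length_formula l, h0, h1, h2] at this
  rw [this]; rfl

theorem classify_low (m : ℤ) (hm : 2 < m) (i : ℤ) (h0 : 0 ≤ i) (hi : i < m - 2)
    (l : List (Fin 3)) (hs : (l.map (deg17 m)).sum = -i) :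
    l = List.replicate i.toNat 1 := by
  obtain ⟨hc, hab⟩ := classify_core m hm i (by omega) l hs
  have ha0 : l.count 0 = 0 := by
    by_contra h
    have h1 : (1:ℤ) ≤ l.count 0 := by exact_mod_cast Nat.one_le_iff_ne_zero.mpr h
    have hb : (0:ℤ) ≤ l.count 1 := Int.ofNat_nonneg _
    nlinarith
  have hb : (l.count 1 : ℤ) = i := by rw [ha0] at hab; simpa using hab
  have : l.count 1 = i.toNat := by omega
  rw [← this]
  exact eq_replicate_one l ha0 hc

theorem classify_m2 (m : ℤ) (hm : 2 < m) (l : List (Fin 3))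
    (hs : (l.map (deg17 m)).sum = -(m - 2)) :
    l = List.replicate (m - 2).toNat 1 ∨ l = [0] := by
  obtain ⟨hc, hab⟩ := classify_core m hm (m - 2) (by omega) l hs
  have ha : l.count 0 = 0 ∨ l.count 0 = 1 := by
    by_contra h
    push_neg at h
    have h1 : (2:ℤ) ≤ l.count 0 := by exact_mod_cast (by omega : 2 ≤ l.count 0)
    have hb : (0:ℤ) ≤ l.count 1 := Int.ofNat_nonneg _
    nlinarith
  rcases ha with ha | ha
  · left
    have hb : (l.count 1 : ℤ) = m - 2 := by rw [ha] at hab; simpa using hab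
    have : l.count 1 = (m - 2).toNat := by omega
    rw [← this]
    exact eq_replicate_one l ha hc
  · right
    have hb : (l.count 1 : ℤ) = 0 := by rw [ha] at hab; push_cast at hab ⊢; linarith
    exact eq_single_zero l ha (by exact_mod_cast hb) hc

theorem classify_m1 (m : ℤ) (hm : 2 < m) (l : List (Fin 3))
    (hs : (l.map (deg17 m)).sum = -(m - 1)) :
    l = List.replicate (m - 1).toNat 1 ∨ l = [0, 1] ∨ l = [1, 0] ∨ (m = 3 ∧ l = [0, 0]) := by
  obtain ⟨hc, hab⟩ := classify_core m hm (m - 1) (by omega) l hs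
  have hb0 : (0:ℤ) ≤ l.count 1 := Int.ofNat_nonneg _
  have ha : l.count 0 = 0 ∨ l.count 0 = 1 ∨ l.count 0 = 2 := by
    by_contra h
    push_neg at h
    have h1 : (3:ℤ) ≤ l.count 0 := by exact_mod_cast (by omega : 3 ≤ l.count 0)
    nlinarith
  rcases ha with ha | ha | ha
  · left
    have hb : (l.count 1 : ℤ) = m - 1 := by rw [ha] at hab; simpa using hab
    have : l.count 1 = (m - 1).toNat := by omega
    rw [← this]
    exact eq_replicate_one l ha hc
  · have hb : (l.count 1 : ℤ) = 1 := by rw [ha] at hab; push_cast at hab ⊢; linarith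
    rcases eq_pair l ha (by exact_mod_cast hb) hc with h | h
    · exact Or.inr (Or.inl h)
    · exact Or.inr (Or.inr (Or.inl h))
  · have hm3 : m = 3 := by
      have : (l.count 0 : ℤ) = 2 := by exact_mod_cast ha
      nlinarith
    have hb : (l.count 1 : ℤ) = 0 := by
      rw [ha, hm3] at hab; push_cast at hab ⊢; linarith
    exact Or.inr (Or.inr (Or.inr ⟨hm3, eq_pair_zero l ha (by exact_mod_cast hb) hc⟩))

theorem no_two (m : ℤ) (hm : 2 < m) (d : ℤ) (hd : -m < d) (l : List (Fin 3))
    (hs : (l.map (deg17 m)).sum = d) : 2 ∉ l := by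
  intro h2
  rw [sum_formula m l] at hs
  have hc : (1:ℤ) ≤ l.count 2 := by exact_mod_cast List.count_pos_iff.mpr h2
  have ha : (0:ℤ) ≤ l.count 0 := Int.ofNat_nonneg _
  have hb : (0:ℤ) ≤ l.count 1 := Int.ofNat_nonneg _
  nlinarith

theorem classify_mm (m : ℤ) (hm : 2 < m) (l : List (Fin 3))
    (hs : (l.map (deg17 m)).sum = -m) (h2 : 2 ∈ l) : l = [2] := by
  rw [sum_formula m l] at hs
  have hc : (1:ℤ) ≤ l.count 2 := by exact_mod_cast List.count_pos_iff.mpr h2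
  have ha : (0:ℤ) ≤ l.count 0 := Int.ofNat_nonneg _
  have hb : (0:ℤ) ≤ l.count 1 := Int.ofNat_nonneg _
  have ha0 : (l.count 0 : ℤ) = 0 := by nlinarith
  have hb0 : (l.count 1 : ℤ) = 0 := by nlinarith
  have hc1 : (l.count 2 : ℤ) = 1 := by nlinarith
  have hmem : ∀ x ∈ l, x = 2 := by
    intro x hx
    fin_cases x
    · exact absurd hx (List.count_eq_zero.mp (by exact_mod_cast ha0))
    · exact absurd hx (List.count_eq_zero.mp (by exact_mod_cast hb0))
    · rfl
  have h3 := List.eq_replicate_of_mem hmem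
  rw [length_formula l] at h3
  have h4 : l = List.replicate 1 2 := by
    rw [h3]; congr 1; omega
  rw [h4]; rfl

/-! ### D on words -/

variable {K : Type} [Field K] {m : ℤ}
  {D : FreeAlgebra K (Fin 3) →ₗ[K] FreeAlgebra K (Fin 3)}

theorem wd_mem (d : ℤ) (l : List (Fin 3)) (h : (l.map (deg17 m)).sum = d) :
    wd K l ∈ gpF K m d :=
  Submodule.subset_span ⟨l, h, rfl⟩

theorem D_one
    (hLeib : ∀ (d : ℤ) (x y : FreeAlgebra K (Fin 3)), x ∈ gpF K m d →
      D (x * y) = D x * y + ((-1 : K) ^ d) • (x * D y)) : D 1 = 0 := by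
  have h1 : (1 : FreeAlgebra K (Fin 3)) ∈ gpF K m 0 :=
    Submodule.subset_span ⟨[], by simp, by simp⟩
  have h2 : D 1 = D 1 + D 1 := by simpa using hLeib 0 1 1 h1
  have h3 : (0 : FreeAlgebra K (Fin 3)) + D 1 = D 1 + D 1 := by rw [zero_add]; exact h2
  exact (add_right_cancel h3).symm

theorem D_word (hDeps : D (FreeAlgebra.ι K 0) = 0) (hDepsStar : D (FreeAlgebra.ι K 1) = 0)
    (hLeib : ∀ (d : ℤ) (x y : FreeAlgebra K (Fin 3)), x ∈ gpF K m d →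
      D (x * y) = D x * y + ((-1 : K) ^ d) • (x * D y))
    (l : List (Fin 3)) (h2 : 2 ∉ l) : D (wd K l) = 0 := by
  induction l with
  | nil => exact D_one hLeib
  | cons j t ih =>
    have hj : (FreeAlgebra.ι K j) ∈ gpF K m (deg17 m j) :=
      Submodule.subset_span ⟨[j], by simp, by simp⟩
    have hDj : D (FreeAlgebra.ι K j) = 0 := by
      fin_cases j
      · exact hDeps
      · exact hDepsStar
      · exact absurd List.mem_cons_self h2
    have ht : 2 ∉ t := fun h => h2 (List.mem_cons_of_mem _ h)
    have hw : wd K (j :: t) = FreeAlgebra.ι K j * wd K t := rfl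
    rw [hw, hLeib (deg17 m j) _ _ hj, hDj, ih ht]
    simp

theorem gp_le_ker (hm : 2 < m)
    (hDeps : D (FreeAlgebra.ι K 0) = 0) (hDepsStar : D (FreeAlgebra.ι K 1) = 0)
    (hLeib : ∀ (d : ℤ) (x y : FreeAlgebra K (Fin 3)), x ∈ gpF K m d →
      D (x * y) = D x * y + ((-1 : K) ^ d) • (x * D y))
    (d : ℤ) (hd : -m < d) : gpF K m d ≤ LinearMap.ker D := by
  rw [gpF, Submodule.span_le]
  rintro x ⟨l, hl, rfl⟩
  exact D_word hDeps hDepsStar hLeib l (no_two m hm d hd l hl)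

theorem img_bot (hm : 2 < m)
    (hDeps : D (FreeAlgebra.ι K 0) = 0) (hDepsStar : D (FreeAlgebra.ι K 1) = 0)
    (hLeib : ∀ (d : ℤ) (x y : FreeAlgebra K (Fin 3)), x ∈ gpF K m d →
      D (x * y) = D x * y + ((-1 : K) ^ d) • (x * D y))
    (d : ℤ) (hd : -m < d) : Submodule.map D (gpF K m d) = ⊥ := by
  rw [gpF, Submodule.map_span, Submodule.span_eq_bot]
  rintro y ⟨x, ⟨l, hl, rfl⟩, rfl⟩
  exact D_word hDeps hDepsStar hLeib l (no_two m hm d hd l hl)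

/-! ### Graded pieces as explicit spans -/

theorem sum_rep (hm : 2 < m) (i : ℤ) (h0 : 0 ≤ i) :
    ((List.replicate i.toNat (1 : Fin 3)).map (deg17 m)).sum = -i := by
  simp [deg17, List.map_replicate, List.sum_replicate]
  omega

theorem sum_z : (([0] : List (Fin 3)).map (deg17 m)).sum = -(m - 2) := by
  simp [deg17]

theorem sum_01 : (([0, 1] : List (Fin 3)).map (deg17 m)).sum = -(m - 1) := by
  simp [deg17]; ring

theorem sum_10 : (([1, 0] : List (Fin 3)).map (deg17 m)).sum = -(m - 1) := by
  simp [deg17]; ring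

theorem sum_00 : (([0, 0] : List (Fin 3)).map (deg17 3)).sum = -((3 : ℤ) - 1) := by
  simp [deg17]

theorem sum_t : (([2] : List (Fin 3)).map (deg17 m)).sum = -m := by
  simp [deg17]

theorem gp_low (hm : 2 < m) (i : ℤ) (h0 : 0 ≤ i) (hi : i < m - 2) :
    gpF K m (-i) = span K {wd K (List.replicate i.toNat 1)} := by
  apply le_antisymm
  · rw [gpF, Submodule.span_le]
    rintro x ⟨l, hl, rfl⟩
    rw [classify_low m hm i h0 hi l hl]
    exact subset_span rfl
  · rw [Submodule.span_le, Set.singleton_subset_iff]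
    exact wd_mem _ _ (sum_rep hm i h0)

theorem gp_m2 (hm : 2 < m) :
    gpF K m (-(m - 2)) = span K {wd K (List.replicate (m - 2).toNat 1), wd K [0]} := by
  apply le_antisymm
  · rw [gpF, Submodule.span_le]
    rintro x ⟨l, hl, rfl⟩
    rcases classify_m2 m hm l hl with h | h
    · rw [h]; exact subset_span (Set.mem_insert _ _)
    · rw [h]; exact subset_span (Set.mem_insert_of_mem _ rfl)
  · rw [Submodule.span_le, Set.insert_subset_iff, Set.singleton_subset_iff]
    exact ⟨wd_mem _ _ (sum_rep hm (m - 2) (by omega)), wd_mem _ _ sum_z⟩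

theorem gp_m1 (hm : 2 < m) (hm3 : m ≠ 3) :
    gpF K m (-(m - 1))
      = span K {wd K (List.replicate (m - 1).toNat 1), wd K [0, 1], wd K [1, 0]} := by
  apply le_antisymm
  · rw [gpF, Submodule.span_le]
    rintro x ⟨l, hl, rfl⟩
    rcases classify_m1 m hm l hl with h | h | h | ⟨h3, h⟩
    · rw [h]; exact subset_span (Set.mem_insert _ _)
    · rw [h]; exact subset_span (Set.mem_insert_of_mem _ (Set.mem_insert _ _))
    · rw [h]; exact subset_span (Set.mem_insert_of_mem _ (Set.mem_insert_of_mem _ rfl))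
    · exact absurd h3 hm3
  · rw [Submodule.span_le, Set.insert_subset_iff, Set.insert_subset_iff,
      Set.singleton_subset_iff]
    exact ⟨wd_mem _ _ (sum_rep hm (m - 1) (by omega)),
      wd_mem _ _ sum_01, wd_mem _ _ sum_10⟩

theorem gp_m1_3 :
    gpF K 3 (-((3:ℤ) - 1))
      = span K {wd K (List.replicate ((3:ℤ) - 1).toNat 1), wd K [0, 1], wd K [1, 0],
          wd K [0, 0]} := by
  apply le_antisymm
  · rw [gpF, Submodule.span_le]
    rintro x ⟨l, hl, rfl⟩
    rcases classify_m1 3 (by norm_num) l hl with h | h | h | ⟨_, h⟩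
    · rw [h]; exact subset_span (Set.mem_insert _ _)
    · rw [h]; exact subset_span (Set.mem_insert_of_mem _ (Set.mem_insert _ _))
    · rw [h]
      exact subset_span (Set.mem_insert_of_mem _ (Set.mem_insert_of_mem _ (Set.mem_insert _ _)))
    · rw [h]
      exact subset_span (Set.mem_insert_of_mem _ (Set.mem_insert_of_mem _
        (Set.mem_insert_of_mem _ rfl)))
  · rw [Submodule.span_le, Set.insert_subset_iff, Set.insert_subset_iff,
      Set.insert_subset_iff, Set.singleton_subset_iff]
    exact ⟨wd_mem _ _ (sum_rep (by norm_num) ((3:ℤ) - 1) (by omega)),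
      wd_mem _ _ sum_01, wd_mem _ _ sum_10, wd_mem _ _ sum_00⟩

theorem img_m (hm : 2 < m)
    (hDeps : D (FreeAlgebra.ι K 0) = 0) (hDepsStar : D (FreeAlgebra.ι K 1) = 0)
    (hDt : D (FreeAlgebra.ι K 2) =
      FreeAlgebra.ι K 0 * FreeAlgebra.ι K 1 -
        ((-1 : K) ^ m) • (FreeAlgebra.ι K 1 * FreeAlgebra.ι K 0))
    (hLeib : ∀ (d : ℤ) (x y : FreeAlgebra K (Fin 3)), x ∈ gpF K m d →
      D (x * y) = D x * y + ((-1 : K) ^ d) • (x * D y)) :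
    Submodule.map D (gpF K m (-m))
      = span K {FreeAlgebra.ι K 0 * FreeAlgebra.ι K 1 -
          ((-1 : K) ^ m) • (FreeAlgebra.ι K 1 * FreeAlgebra.ι K 0)} := by
  apply le_antisymm
  · rw [gpF, Submodule.map_span, Submodule.span_le]
    rintro y ⟨x, ⟨l, hl, rfl⟩, rfl⟩
    by_cases h2 : 2 ∈ l
    · rw [classify_mm m hm l hl h2]
      have hw : (List.map (FreeAlgebra.ι K) [(2 : Fin 3)]).prod = FreeAlgebra.ι K 2 := by
        simp
      rw [hw, hDt]
      exact subset_span rfl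
    · rw [D_word hDeps hDepsStar hLeib l h2]
      exact zero_mem _
  · rw [Submodule.span_le, Set.singleton_subset_iff]
    exact ⟨FreeAlgebra.ι K 2, Submodule.subset_span ⟨[2], sum_t, by simp⟩, hDt⟩

theorem comap_span_singleton {M : Type*} [AddCommGroup M] [Module K M]
    (N : Submodule K M) (w : M) (hw : w ∈ N) :
    Submodule.comap N.subtype (span K {w}) = span K {(⟨w, hw⟩ : N)} := by
  ext x
  simp only [Submodule.mem_comap, Submodule.mem_span_singleton, Submodule.coe_subtype]
  constructor
  · rintro ⟨c, hc⟩
    exact ⟨c, by ext; simpa using hc⟩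
  · rintro ⟨c, hc⟩
    exact ⟨c, by rw [← hc]; simp⟩

theorem w0_ne_zero (K : Type) [Field K] (m : ℤ) :
    FreeAlgebra.ι K (0 : Fin 3) * FreeAlgebra.ι K 1 -
      ((-1 : K) ^ m) • (FreeAlgebra.ι K 1 * FreeAlgebra.ι K 0) ≠ 0 := by
  intro h
  have e1 : FreeAlgebra.ι K (0 : Fin 3) * FreeAlgebra.ι K 1
      = FreeAlgebra.basisFreeMonoid K (Fin 3) (FreeMonoid.ofList [0, 1]) := by
    rw [basis_word]
    show _ = (List.map (FreeAlgebra.ι K) [0, 1]).prod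
    simp
  have e2 : FreeAlgebra.ι K (1 : Fin 3) * FreeAlgebra.ι K 0
      = FreeAlgebra.basisFreeMonoid K (Fin 3) (FreeMonoid.ofList [1, 0]) := by
    rw [basis_word]
    show _ = (List.map (FreeAlgebra.ι K) [1, 0]).prod
    simp
  rw [e1, e2] at h
  have h2 := congrArg (fun z => ((FreeAlgebra.basisFreeMonoid K (Fin 3)).repr z)
    (FreeMonoid.ofList [0, 1])) h
  have hne : FreeMonoid.ofList ([1, 0] : List (Fin 3)) ≠ FreeMonoid.ofList [0, 1] := by
    intro he
    have := FreeMonoid.ofList.injective he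
    simp at this
  have hne' : (FreeMonoid.of (1 : Fin 3) * FreeMonoid.of 0)
      ≠ (FreeMonoid.of 0 * FreeMonoid.of 1) := hne
  simp [Basis.repr_self, Finsupp.single_eq_of_ne' hne'] at h2

theorem e01 (K : Type) [Field K] :
    wd K [0, 1] = FreeAlgebra.ι K (0 : Fin 3) * FreeAlgebra.ι K 1 := by
  show (List.map (FreeAlgebra.ι K) [0, 1]).prod = _
  simp

theorem e10 (K : Type) [Field K] :
    wd K [1, 0] = FreeAlgebra.ι K (1 : Fin 3) * FreeAlgebra.ι K 0 := by
  show (List.map (FreeAlgebra.ι K) [1, 0]).prod = _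
  simp

end Stmt17Aux

namespace Stmt17Aux

theorem rep_ne {n : ℕ} {L : List (Fin 3)} (h0 : (0 : Fin 3) ∈ L) :
    List.replicate n 1 ≠ L := by
  intro h
  have := List.eq_of_mem_replicate (h ▸ h0)
  exact absurd this (by decide)

theorem inj3 (n : ℕ) :
    Function.Injective ![List.replicate n (1 : Fin 3), [0, 1], [1, 0]] := by
  have hne1 : List.replicate n (1 : Fin 3) ≠ [0, 1] := rep_ne (by decide)
  have hne2 : List.replicate n (1 : Fin 3) ≠ [1, 0] := rep_ne (by decide)
  have hne3 : ([0, 1] : List (Fin 3)) ≠ [1, 0] := by decide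
  intro a b hab
  fin_cases a <;> fin_cases b <;> simp_all

theorem inj2 (n : ℕ) :
    Function.Injective ![List.replicate n (1 : Fin 3), [0]] := by
  have hne1 : List.replicate n (1 : Fin 3) ≠ [0] := rep_ne (by decide)
  intro a b hab
  fin_cases a <;> fin_cases b <;> simp_all

end Stmt17Aux


open Stmt17Aux in
/-- for m > 2, the dg-algebra Γ' = K⟨ε, ε*, t⟩ with |ε| = 2−m, |ε*| = −1,
|t| = −m, d(ε) = d(ε*) = 0 and d(t) = εε* − (−1)^m ε*ε, has
dim H^{−i} = 1 for 0 ≤ i < m−2, dim H^{−(m−2)} = 2, and dim H^{−(m−1)} = 2 + δ_{3,m}. -/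
theorem stmt_17 (K : Type) [Field K] (m : ℤ) (hm : 2 < m)
    (D : FreeAlgebra K (Fin 3) →ₗ[K] FreeAlgebra K (Fin 3))
    (hDeps : D (FreeAlgebra.ι K 0) = 0)
    (hDepsStar : D (FreeAlgebra.ι K 1) = 0)
    (hDt : D (FreeAlgebra.ι K 2) =
      FreeAlgebra.ι K 0 * FreeAlgebra.ι K 1 -
        ((-1 : K) ^ m) • (FreeAlgebra.ι K 1 * FreeAlgebra.ι K 0))
    (hLeib : ∀ (d : ℤ) (x y : FreeAlgebra K (Fin 3)), x ∈ gpF K m d →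
      D (x * y) = D x * y + ((-1 : K) ^ d) • (x * D y))
    (hshift : ∀ d : ℤ, Submodule.map D (gpF K m d) ≤ gpF K m (d + 1))
    (hDD : ∀ x, D (D x) = 0) :
    (∀ i : ℤ, 0 ≤ i → i < m - 2 → Module.finrank K (Hneg K m D i) = 1) ∧
      Module.finrank K (Hneg K m D (m - 2)) = 2 ∧
      Module.finrank K (Hneg K m D (m - 1)) = 2 + (if m = 3 then 1 else 0) := by
  refine ⟨?_, ?_, ?_⟩
  · intro i h0 hi
    have hker : gpF K m (-i) ⊓ LinearMap.ker D = gpF K m (-i) :=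
      inf_eq_left.mpr (gp_le_ker hm hDeps hDepsStar hLeib (-i) (by omega))
    have himg : Submodule.map D (gpF K m (-i - 1)) = ⊥ :=
      img_bot hm hDeps hDepsStar hLeib (-i - 1) (by omega)
    unfold Hneg
    rw [himg, Submodule.comap_bot, Submodule.ker_subtype,
      (Submodule.quotEquivOfEqBot _ rfl).finrank_eq,
      (LinearEquiv.ofEq _ _ (hker.trans (gp_low hm i h0 hi))).finrank_eq]
    exact finrank_span_singleton (wd_ne_zero K _)
  · have hker : gpF K m (-(m - 2)) ⊓ LinearMap.ker D = gpF K m (-(m - 2)) :=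
      inf_eq_left.mpr (gp_le_ker hm hDeps hDepsStar hLeib (-(m - 2)) (by omega))
    have himg : Submodule.map D (gpF K m (-(m - 2) - 1)) = ⊥ :=
      img_bot hm hDeps hDepsStar hLeib (-(m - 2) - 1) (by omega)
    unfold Hneg
    rw [himg, Submodule.comap_bot, Submodule.ker_subtype,
      (Submodule.quotEquivOfEqBot _ rfl).finrank_eq,
      (LinearEquiv.ofEq _ _ (hker.trans (gp_m2 hm))).finrank_eq]
    have hinj : Function.Injective ![List.replicate (m - 2).toNat (1 : Fin 3), [0]] :=
      inj2 _
    have hr := range2 (fun j => wd K (![List.replicate (m - 2).toNat (1 : Fin 3), [0]] j))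
    simp only [Matrix.cons_val_zero, Matrix.cons_val_one, Matrix.head_cons] at hr
    rw [← hr, finrank_span_words K 2 _ hinj]
  · rcases eq_or_ne m 3 with hm3 | hm3
    · subst hm3
      rw [if_pos rfl]
      have hker : gpF K 3 (-((3:ℤ) - 1)) ⊓ LinearMap.ker D = gpF K 3 (-((3:ℤ) - 1)) :=
        inf_eq_left.mpr (gp_le_ker hm hDeps hDepsStar hLeib _ (by omega))
      have himg : Submodule.map D (gpF K 3 (-((3:ℤ) - 1) - 1))
          = Submodule.span K {FreeAlgebra.ι K 0 * FreeAlgebra.ι K 1 -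
              ((-1 : K) ^ (3:ℤ)) • (FreeAlgebra.ι K 1 * FreeAlgebra.ι K 0)} := by
        rw [show (-((3:ℤ) - 1) - 1) = -(3:ℤ) by norm_num]
        exact img_m hm hDeps hDepsStar hDt hLeib
      unfold Hneg
      set S : Set (FreeAlgebra K (Fin 3)) :=
        {wd K (List.replicate ((3:ℤ) - 1).toNat 1), wd K [0, 1], wd K [1, 0], wd K [0, 0]}
        with hS
      set N := gpF K 3 (-((3:ℤ) - 1)) ⊓ LinearMap.ker D with hN
      have hNS : N = Submodule.span K S := hker.trans gp_m1_3
      have hw0S : FreeAlgebra.ι K 0 * FreeAlgebra.ι K 1 -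
          ((-1 : K) ^ (3:ℤ)) • (FreeAlgebra.ι K 1 * FreeAlgebra.ι K 0)
          ∈ Submodule.span K S := by
        rw [← e01 K, ← e10 K]
        exact sub_mem
          (subset_span (Set.mem_insert_of_mem _ (Set.mem_insert _ _)))
          (Submodule.smul_mem _ _ (subset_span (Set.mem_insert_of_mem _
            (Set.mem_insert_of_mem _ (Set.mem_insert _ _)))))
      have hw0 : FreeAlgebra.ι K 0 * FreeAlgebra.ι K 1 -
          ((-1 : K) ^ (3:ℤ)) • (FreeAlgebra.ι K 1 * FreeAlgebra.ι K 0) ∈ N :=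
        hNS.symm ▸ hw0S
      rw [himg, comap_span_singleton _ _ hw0]
      haveI : FiniteDimensional K (Submodule.span K S) :=
        FiniteDimensional.span_of_finite K (Set.toFinite _)
      haveI : FiniteDimensional K N :=
        (LinearEquiv.ofEq _ _ hNS).symm.finiteDimensional
      have hq := Submodule.finrank_quotient_add_finrank
        (Submodule.span K {(⟨_, hw0⟩ : N)})
      have h2 : Module.finrank K
          (Submodule.span K {(⟨_, hw0⟩ : N)}) = 1 := by
        refine finrank_span_singleton ?_
        simp only [ne_eq, Submodule.mk_eq_zero]
        exact w0_ne_zero K 3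
      have h1 : Module.finrank K N = 4 := by
        rw [(LinearEquiv.ofEq _ _ hNS).finrank_eq]
        have hrep : ((3:ℤ) - 1).toNat = 2 := rfl
        have hinj : Function.Injective
            ![List.replicate 2 (1 : Fin 3), [0, 1], [1, 0], [0, 0]] := by decide
        have hr := range4 (fun j =>
          wd K (![List.replicate 2 (1 : Fin 3), [0, 1], [1, 0], [0, 0]] j))
        simp only [Matrix.cons_val_zero, Matrix.cons_val_one, Matrix.head_cons,
          Matrix.cons_val_two, Matrix.tail_cons, Matrix.cons_val_three] at hr
        rw [hS, hrep, ← hr, finrank_span_words K 4 _ hinj]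
      have hgoal : Module.finrank K ((↥N) ⧸ Submodule.span K
          {(⟨_, hw0⟩ : N)}) = 3 := by omega
      exact hgoal.trans (by norm_num)
    · rw [if_neg hm3]
      have hker : gpF K m (-(m - 1)) ⊓ LinearMap.ker D = gpF K m (-(m - 1)) :=
        inf_eq_left.mpr (gp_le_ker hm hDeps hDepsStar hLeib _ (by omega))
      have himg : Submodule.map D (gpF K m (-(m - 1) - 1))
          = Submodule.span K {FreeAlgebra.ι K 0 * FreeAlgebra.ι K 1 -
              ((-1 : K) ^ m) • (FreeAlgebra.ι K 1 * FreeAlgebra.ι K 0)} := by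
        rw [show (-(m - 1) - 1) = -m by ring]
        exact img_m hm hDeps hDepsStar hDt hLeib
      unfold Hneg
      set S : Set (FreeAlgebra K (Fin 3)) :=
        {wd K (List.replicate (m - 1).toNat 1), wd K [0, 1], wd K [1, 0]} with hS
      set N := gpF K m (-(m - 1)) ⊓ LinearMap.ker D with hN
      have hNS : N = Submodule.span K S := hker.trans (gp_m1 hm hm3)
      have hw0S : FreeAlgebra.ι K 0 * FreeAlgebra.ι K 1 -
          ((-1 : K) ^ m) • (FreeAlgebra.ι K 1 * FreeAlgebra.ι K 0)
          ∈ Submodule.span K S := by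
        rw [← e01 K, ← e10 K]
        exact sub_mem
          (subset_span (Set.mem_insert_of_mem _ (Set.mem_insert _ _)))
          (Submodule.smul_mem _ _ (subset_span (Set.mem_insert_of_mem _
            (Set.mem_insert_of_mem _ rfl))))
      have hw0 : FreeAlgebra.ι K 0 * FreeAlgebra.ι K 1 -
          ((-1 : K) ^ m) • (FreeAlgebra.ι K 1 * FreeAlgebra.ι K 0) ∈ N :=
        hNS.symm ▸ hw0S
      rw [himg, comap_span_singleton _ _ hw0]
      haveI : FiniteDimensional K (Submodule.span K S) :=
        FiniteDimensional.span_of_finite K (Set.toFinite _)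
      haveI : FiniteDimensional K N :=
        (LinearEquiv.ofEq _ _ hNS).symm.finiteDimensional
      have hq := Submodule.finrank_quotient_add_finrank
        (Submodule.span K {(⟨_, hw0⟩ : N)})
      have h2 : Module.finrank K
          (Submodule.span K {(⟨_, hw0⟩ : N)}) = 1 := by
        refine finrank_span_singleton ?_
        simp only [ne_eq, Submodule.mk_eq_zero]
        exact w0_ne_zero K m
      have h1 : Module.finrank K N = 3 := by
        rw [(LinearEquiv.ofEq _ _ hNS).finrank_eq]
        have hinj : Function.Injective
            ![List.replicate (m - 1).toNat (1 : Fin 3), [0, 1], [1, 0]] := inj3 _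
        have hr := range3 (fun j =>
          wd K (![List.replicate (m - 1).toNat (1 : Fin 3), [0, 1], [1, 0]] j))
        simp only [Matrix.cons_val_zero, Matrix.cons_val_one, Matrix.head_cons,
          Matrix.cons_val_two, Matrix.tail_cons] at hr
        rw [hS, ← hr, finrank_span_words K 3 _ hinj]
      have hgoal : Module.finrank K ((↥N) ⧸ Submodule.span K
          {(⟨_, hw0⟩ : N)}) = 2 := by omega
      exact hgoal
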